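/- Let u be a term (built from variables, composition ·, intersection ∩, converse, 1, and ⊤) with associated graph G(u) = (V_u, E_u, ι_u, o_u). Let S be a set and σ an interpretation of variables as binary relations on S. Then for all i, j ∈ S, the pair (i,j) belongs to the relational interpretation of u under σ if and only if there exists a function φ : V_u → S such that φ(ι_u) = i, φ(o_u) = j, and for every edge (p,a,q) ∈ E_u, (φ(p), φ(q)) ∈ σ(a). -/

import Mathlib

/-- A 2-pointed labelled directed graph over label set `X`:
a finite vertex type, a set of labelled edges, and distinguished
input and output vertices. -/
structure PGraph (X : Type) where
  V : Type
  fin : Finite V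
  E : Set (V × X × V)
  inp : V
  out : V

/-- A graph homomorphism preserves the input, the output, and labelled edges. -/
def IsHom {X : Type} (G H : PGraph X) (φ : G.V → H.V) : Prop :=
  φ G.inp = H.inp ∧ φ G.out = H.out ∧
    ∀ p a q, (p, a, q) ∈ G.E → (φ p, a, φ q) ∈ H.E

/-- `gle G G'` (written `G ≲ G'`) iff there is a homomorphism from `G'` to `G`. -/
def gle {X : Type} (G G' : PGraph X) : Prop := ∃ φ : G'.V → G.V, IsHom G' G φ

/-- Graph of a variable: two vertices, one labelled edge from input to output. -/
def gvar {X : Type} (a : X) : PGraph X :=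
  ⟨Bool, inferInstance, {(false, a, true)}, false, true⟩

/-- Graph of `1`: one vertex, no edges. -/
def gone {X : Type} : PGraph X := ⟨Unit, inferInstance, ∅, (), ()⟩

/-- Graph of `⊤`: two isolated vertices. -/
def gtop {X : Type} : PGraph X := ⟨Bool, inferInstance, ∅, false, true⟩

/-- Converse of a graph: swap input and output. -/
def gconv {X : Type} (G : PGraph X) : PGraph X := ⟨G.V, G.fin, G.E, G.out, G.inp⟩

/-- Series composition: merge the output of `G` with the input of `H`. -/
def gseq {X : Type} (G H : PGraph X) : PGraph X :=
  let r : G.V ⊕ H.V → G.V ⊕ H.V → Prop :=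
    fun x y => x = Sum.inl G.out ∧ y = Sum.inr H.inp
  { V := Quot r
    fin := by
      have := G.fin; have := H.fin
      exact Finite.of_surjective (Quot.mk r) (fun q => Quot.exists_rep q)
    E := { e | (∃ p a q, (p, a, q) ∈ G.E ∧
                  e = (Quot.mk r (.inl p), a, Quot.mk r (.inl q)))
             ∨ (∃ p a q, (p, a, q) ∈ H.E ∧
                  e = (Quot.mk r (.inr p), a, Quot.mk r (.inr q))) }
    inp := Quot.mk r (.inl G.inp)
    out := Quot.mk r (.inr H.out) }

/-- Parallel composition: merge the inputs and merge the outputs. -/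
def gpar {X : Type} (G H : PGraph X) : PGraph X :=
  let r : G.V ⊕ H.V → G.V ⊕ H.V → Prop :=
    fun x y => (x = Sum.inl G.inp ∧ y = Sum.inr H.inp) ∨
               (x = Sum.inl G.out ∧ y = Sum.inr H.out)
  { V := Quot r
    fin := by
      have := G.fin; have := H.fin
      exact Finite.of_surjective (Quot.mk r) (fun q => Quot.exists_rep q)
    E := { e | (∃ p a q, (p, a, q) ∈ G.E ∧
                  e = (Quot.mk r (.inl p), a, Quot.mk r (.inl q)))
             ∨ (∃ p a q, (p, a, q) ∈ H.E ∧
                  e = (Quot.mk r (.inr p), a, Quot.mk r (.inr q))) }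
    inp := Quot.mk r (.inl G.inp)
    out := Quot.mk r (.inl G.out) }

/-- Terms: variables, composition, intersection, converse, `1` and `⊤`. -/
inductive Trm (X : Type) : Type
  | var : X → Trm X
  | comp : Trm X → Trm X → Trm X
  | inter : Trm X → Trm X → Trm X
  | conv : Trm X → Trm X
  | one : Trm X
  | top : Trm X

/-- The graph of a term. -/
def grOf {X : Type} : Trm X → PGraph X
  | .var a => gvar a
  | .comp u v => gseq (grOf u) (grOf v)
  | .inter u v => gpar (grOf u) (grOf v)
  | .conv u => gconv (grOf u)
  | .one => gone
  | .top => gtop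

/-- Relational interpretation of a term, given an interpretation `σ`
of the variables as binary relations on `S`. -/
def interp {X S : Type} (σ : X → S → S → Prop) : Trm X → S → S → Prop
  | .var a => σ a
  | .comp u v => fun i j => ∃ k, interp σ u i k ∧ interp σ v k j
  | .inter u v => fun i j => interp σ u i j ∧ interp σ v i j
  | .conv u => fun i j => interp σ u j i
  | .one => fun i j => i = j
  | .top => fun _ _ => True

/-- Andréka–Bredikhin lemma: `(i,j)` is in the relational interpretation of
a term `u` iff there is a map from the vertices of `G(u)` to `S` sending the
input to `i`, the output to `j`, and every edge into the interpretation of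
its label. -/
theorem andreka_bredikhin {X S : Type} (σ : X → S → S → Prop) (u : Trm X) (i j : S) :
    interp σ u i j ↔
      ∃ φ : (grOf u).V → S, φ (grOf u).inp = i ∧ φ (grOf u).out = j ∧
        ∀ p a q, (p, a, q) ∈ (grOf u).E → σ a (φ p) (φ q) := by
  induction u generalizing i j with
  | var a =>
    simp only [interp, grOf, gvar]
    constructor
    · intro h
      refine ⟨fun b => if b then j else i, rfl, rfl, ?_⟩
      rintro p x q hpq
      replace hpq : (p, x, q) = (false, a, true) := hpq
      simp only [Prod.mk.injEq] at hpq
      obtain ⟨hp, hx, hq⟩ := hpq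
      subst hp; subst hx; subst hq; simpa using h
    · rintro ⟨φ, hi, ho, he⟩
      exact hi ▸ ho ▸ he false a true rfl
  | comp u v ihu ihv =>
    constructor
    · rintro ⟨k, hu, hv⟩
      obtain ⟨φu, hui, huo, hue⟩ := (ihu i k).mp hu
      obtain ⟨φv, hvi, hvo, hve⟩ := (ihv k j).mp hv
      refine ⟨Quot.lift (Sum.elim φu φv) ?_, hui, hvo, ?_⟩
      · rintro x y ⟨rfl, rfl⟩
        simpa using huo.trans hvi.symm
      · rintro p a q (⟨p', a', q', hE, he⟩ | ⟨p', a', q', hE, he⟩) <;>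
          (obtain ⟨rfl, rfl, rfl⟩ := Prod.mk.injEq .. ▸ he) <;> simp_all
    · rintro ⟨φ, hi, ho, he⟩
      refine ⟨φ (Quot.mk _ (Sum.inl (grOf u).out)), (ihu ..).mpr ?_, (ihv ..).mpr ?_⟩
      · exact ⟨fun x => φ (Quot.mk _ (Sum.inl x)), hi, rfl,
          fun p a q h => he _ _ _ (Or.inl ⟨p, a, q, h, rfl⟩)⟩
      · refine ⟨fun x => φ (Quot.mk _ (Sum.inr x)), ?_, ho,
          fun p a q h => he _ _ _ (Or.inr ⟨p, a, q, h, rfl⟩)⟩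
        exact congrArg φ (Quot.sound ⟨rfl, rfl⟩) |>.symm
  | inter u v ihu ihv =>
    constructor
    · rintro ⟨hu, hv⟩
      obtain ⟨φu, hui, huo, hue⟩ := (ihu i j).mp hu
      obtain ⟨φv, hvi, hvo, hve⟩ := (ihv i j).mp hv
      refine ⟨Quot.lift (Sum.elim φu φv) ?_, hui, huo, ?_⟩
      · rintro x y (⟨rfl, rfl⟩ | ⟨rfl, rfl⟩)
        · simpa using hui.trans hvi.symm
        · simpa using huo.trans hvo.symm
      · rintro p a q (⟨p', a', q', hE, he⟩ | ⟨p', a', q', hE, he⟩) <;>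
          (obtain ⟨rfl, rfl, rfl⟩ := Prod.mk.injEq .. ▸ he) <;> simp_all
    · rintro ⟨φ, hi, ho, he⟩
      constructor
      · exact (ihu ..).mpr ⟨fun x => φ (Quot.mk _ (Sum.inl x)), hi, ho,
          fun p a q h => he _ _ _ (Or.inl ⟨p, a, q, h, rfl⟩)⟩
      · refine (ihv ..).mpr ⟨fun x => φ (Quot.mk _ (Sum.inr x)), ?_, ?_,
          fun p a q h => he _ _ _ (Or.inr ⟨p, a, q, h, rfl⟩)⟩
        · exact (congrArg φ (Quot.sound (Or.inl ⟨rfl, rfl⟩))).symm.trans hi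
        · exact (congrArg φ (Quot.sound (Or.inr ⟨rfl, rfl⟩))).symm.trans ho
  | conv u ihu =>
    simp only [interp, grOf, gconv]
    exact (ihu j i).trans
      ⟨fun ⟨φ, h1, h2, h3⟩ => ⟨φ, h2, h1, h3⟩, fun ⟨φ, h1, h2, h3⟩ => ⟨φ, h2, h1, h3⟩⟩
  | one =>
    constructor
    · rintro rfl
      exact ⟨fun _ => i, rfl, rfl, fun p a q h => h.elim⟩
    · rintro ⟨φ, hi, ho, _⟩
      exact hi.symm.trans ho
  | top =>
    simp only [interp, grOf, gtop]
    constructor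
    · intro _
      exact ⟨fun b => if b then j else i, rfl, rfl, fun p a q h => h.elim⟩
    · intro _; trivial
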